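/- Let Γ be a strongly regular graph such that every local graph Γ(x) (the induced subgraph on the neighborhood of x) is strongly regular with parameters (v',k',λ',μ') where v' = k and k' = λ. Then for adjacent vertices x,y the induced subgraph on Γ(x)∩Γ(y) is λ'-regular, and for nonadjacent vertices x,y the induced subgraph on Γ(x)∩Γ(y) is μ'-regular. Consequently Γ satisfies the 4-vertex condition with α = λλ'/2 edges in each λ-graph and β = μμ'/2 edges in each μ-graph. -/

import Mathlib

open SimpleGraph Finset
open scoped Classical

/-- The number of edges of `G` inside the set `s` (edges of the induced subgraph). -/
noncomputable def edgesIn {V : Type*} [Fintype V] (G : SimpleGraph V) (s : Set V) : ℕ :=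
  (G.induce s).edgeFinset.card

private lemma reg_adj {V : Type*} [Fintype V] (G : SimpleGraph V) (k l l' μ' : ℕ)
    (hloc : ∀ x : V, (G.induce (G.neighborSet x)).IsSRGWith k l l' μ')
    (x y : V) (hxy : G.Adj x y) :
    (G.induce (G.commonNeighbors x y)).IsRegularOfDegree l' := by
  rintro ⟨z, hzx, hzy⟩
  have hzx' : G.Adj x z := hzx
  have hzy' : G.Adj y z := hzy
  have hadj : (G.induce (G.neighborSet x)).Adj ⟨y, hxy⟩ ⟨z, hzx'⟩ := hzy'
  have hcard := (hloc x).of_adj _ _ hadj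
  rw [← SimpleGraph.card_neighborSet_eq_degree, ← hcard]
  apply Fintype.card_congr
  refine ⟨?_, ?_, ?_, ?_⟩
  · rintro ⟨⟨w, hwx, hwy⟩, hzw⟩
    have hzw' : G.Adj z w := hzw
    exact ⟨⟨w, hwx⟩, hwy, hzw'⟩
  · rintro ⟨⟨w, hwx⟩, hyw, hzw⟩
    have hyw' : G.Adj y w := hyw
    have hzw' : G.Adj z w := hzw
    exact ⟨⟨w, hwx, hyw'⟩, hzw'⟩
  · rintro ⟨⟨w, hwx, hwy⟩, hzw⟩; rfl
  · rintro ⟨⟨w, hwx⟩, hyw, hzw⟩; rfl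

private lemma reg_nadj {V : Type*} [Fintype V] (G : SimpleGraph V) (k l l' μ' : ℕ)
    (hloc : ∀ x : V, (G.induce (G.neighborSet x)).IsSRGWith k l l' μ')
    (x y : V) (hne : x ≠ y) (hxy : ¬ G.Adj x y) :
    (G.induce (G.commonNeighbors x y)).IsRegularOfDegree μ' := by
  rintro ⟨z, hzx, hzy⟩
  have hxz : G.Adj z x := G.adj_symm hzx
  have hyz : G.Adj z y := G.adj_symm hzy
  have hne' : (⟨x, hxz⟩ : G.neighborSet z) ≠ ⟨y, hyz⟩ := by
    simp only [ne_eq, Subtype.mk.injEq]; exact fun h => hne (congrArg Subtype.val h)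
  have hnadj : ¬ (G.induce (G.neighborSet z)).Adj ⟨x, hxz⟩ ⟨y, hyz⟩ := hxy
  have hcard := (hloc z).of_not_adj hne' hnadj
  rw [← SimpleGraph.card_neighborSet_eq_degree, ← hcard]
  apply Fintype.card_congr
  refine ⟨?_, ?_, ?_, ?_⟩
  · rintro ⟨⟨w, hwx, hwy⟩, hzw⟩
    have hzw' : G.Adj z w := hzw
    have hwx' : G.Adj x w := hwx
    have hwy' : G.Adj y w := hwy
    exact ⟨⟨w, hzw'⟩, hwx', hwy'⟩
  · rintro ⟨⟨w, hzw⟩, hxw, hyw⟩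
    have hxw' : G.Adj x w := hxw
    have hyw' : G.Adj y w := hyw
    have hzw' : G.Adj z w := hzw
    exact ⟨⟨w, hxw', hyw'⟩, hzw'⟩
  · rintro ⟨⟨w, hwx, hwy⟩, hzw⟩; rfl
  · rintro ⟨⟨w, hzw⟩, hxw, hyw⟩; rfl

private lemma two_mul_edges {V : Type*} [Fintype V] (G : SimpleGraph V) (s : Set V) (d : ℕ)
    (hreg : (G.induce s).IsRegularOfDegree d) :
    2 * edgesIn G s = Nat.card s * d := by
  have h2 := (G.induce s).sum_degrees_eq_twice_card_edges
  rw [edgesIn, ← h2]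
  rw [Finset.sum_congr rfl fun w _ => hreg w, Finset.sum_const, smul_eq_mul,
    Finset.card_univ, Nat.card_eq_fintype_card]

/-- If a strongly regular graph is locally strongly regular with parameters
`(k, λ, λ', μ')`, then every λ-graph is `λ'`-regular and every μ-graph is `μ'`-regular,
so that `G` satisfies the 4-vertex condition with `α = λλ'/2` and `β = μμ'/2`. -/
theorem stmt2 {V : Type*} [Fintype V] (G : SimpleGraph V) (v k l μ l' μ' : ℕ)
    (h : G.IsSRGWith v k l μ)
    (hloc : ∀ x : V, (G.induce (G.neighborSet x)).IsSRGWith k l l' μ') :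
    (∀ x y : V, G.Adj x y →
        (G.induce (G.commonNeighbors x y)).IsRegularOfDegree l') ∧
    (∀ x y : V, x ≠ y → ¬G.Adj x y →
        (G.induce (G.commonNeighbors x y)).IsRegularOfDegree μ') ∧
    (∀ x y : V, G.Adj x y → 2 * edgesIn G (G.commonNeighbors x y) = l * l') ∧
    (∀ x y : V, x ≠ y → ¬G.Adj x y →
        2 * edgesIn G (G.commonNeighbors x y) = μ * μ') := by
  refine ⟨fun x y hxy => reg_adj G k l l' μ' hloc x y hxy,
    fun x y hne hxy => reg_nadj G k l l' μ' hloc x y hne hxy, ?_, ?_⟩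
  · intro x y hxy
    have h2 : Nat.card (G.commonNeighbors x y) = l := by
      rw [Nat.card_eq_fintype_card]
      exact (Fintype.card_congr (Equiv.refl _)).trans (h.of_adj x y hxy)
    have hr := reg_adj G k l l' μ' hloc x y hxy
    have h1 := two_mul_edges G (G.commonNeighbors x y) l' (by convert hr using 2)
    rw [h1, h2]
  · intro x y hne hxy
    have h2 : Nat.card (G.commonNeighbors x y) = μ := by
      rw [Nat.card_eq_fintype_card]
      exact (Fintype.card_congr (Equiv.refl _)).trans (h.of_not_adj hne hxy)
    have hr := reg_nadj G k l l' μ' hloc x y hne hxy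
    have h1 := two_mul_edges G (G.commonNeighbors x y) μ' (by convert hr using 2)
    rw [h1, h2]
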